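/- Let U ⊆ ℂ be open and F = (a, b; c, d) : U → SL(2,ℂ) holomorphic with det F'(z) = 0 and F'(z) ≠ 0 for all z ∈ U (a holomorphic null immersion). Define f : U → ℝ³ by f = (Re w, Im w, x₃), where w = (a·conj(c) + b·conj(d))/(|c|² + |d|²) and x₃ = 1/(|c|² + |d|²). Then f is a conformal immersion: writing z = x + iy, at every point of U one has ‖∂f/∂x‖ = ‖∂f/∂y‖ > 0 and ⟨∂f/∂x, ∂f/∂y⟩ = 0. -/

import Mathlib

/-!
STATEMENT 17: The half-space Bryant representation formula applied to a
holomorphic null immersion `F : U → SL(2,ℂ)` yields a conformal immersion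
`f = (Re w, Im w, x₃)` into the upper half space.
-/

attribute [local instance] Matrix.normedAddCommGroup Matrix.normedSpace

open Matrix Complex RealInnerProductSpace
open ComplexConjugate

noncomputable def lc (α β : ℂ) : ℂ →L[ℝ] ℂ :=
  α • (ContinuousLinearMap.id ℝ ℂ) + β • (Complex.conjCLE.toContinuousLinearMap)

@[simp] lemma lc_apply (α β v : ℂ) : lc α β v = α * v + β * conj v := by
  simp [lc]

lemma lc_of_hasDerivAt {g : ℂ → ℂ} {g' p : ℂ} (h : HasDerivAt g g' p) :
    HasFDerivAt g (lc g' 0) p := by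
  have h2 := h.hasFDerivAt.restrictScalars ℝ
  have e : (ContinuousLinearMap.smulRight (1 : ℂ →L[ℂ] ℂ) g').restrictScalars ℝ = lc g' 0 := by
    ext v; simp [mul_comm]
  exact e ▸ h2

lemma lc_conj {g : ℂ → ℂ} {α β : ℂ} {p : ℂ} (h : HasFDerivAt g (lc α β) p) :
    HasFDerivAt (fun z => conj (g z)) (lc (conj β) (conj α)) p := by
  have h2 := (Complex.conjCLE.toContinuousLinearMap.hasFDerivAt (x := g p)).comp p h
  have e : Complex.conjCLE.toContinuousLinearMap.comp (lc α β) = lc (conj β) (conj α) := by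
    ext v; simp [_root_.map_mul]; ring
  exact e ▸ h2

lemma lc_add {f g : ℂ → ℂ} {α β γ δ : ℂ} {p : ℂ} (hf : HasFDerivAt f (lc α β) p)
    (hg : HasFDerivAt g (lc γ δ) p) :
    HasFDerivAt (fun z => f z + g z) (lc (α + γ) (β + δ)) p := by
  have h2 := hf.add hg
  have e : lc α β + lc γ δ = lc (α + γ) (β + δ) := by ext v; simp; ring
  exact e ▸ h2

lemma lc_mul {f g : ℂ → ℂ} {α β γ δ : ℂ} {p : ℂ} (hf : HasFDerivAt f (lc α β) p)
    (hg : HasFDerivAt g (lc γ δ) p) :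
    HasFDerivAt (fun z => f z * g z)
      (lc (f p * γ + g p * α) (f p * δ + g p * β)) p := by
  have h2 := hf.mul hg
  have e : f p • lc γ δ + g p • lc α β = lc (f p * γ + g p * α) (f p * δ + g p * β) := by
    ext v; simp; ring
  exact e ▸ h2

lemma lc_inv {g : ℂ → ℂ} {γ δ : ℂ} {p : ℂ} (hg : HasFDerivAt g (lc γ δ) p) (hgp : g p ≠ 0) :
    HasFDerivAt (fun z => (g z)⁻¹) (lc (-γ / g p ^ 2) (-δ / g p ^ 2)) p := by
  have h2 := (hasFDerivAt_inv' (𝕜 := ℝ) hgp).comp p hg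
  have e : (-(ContinuousLinearMap.mulLeftRight ℝ ℂ (g p)⁻¹ (g p)⁻¹)).comp (lc γ δ)
      = lc (-γ / g p ^ 2) (-δ / g p ^ 2) := by
    ext v
    simp [ContinuousLinearMap.mulLeftRight_apply]
    field_simp
    ring
  exact e ▸ h2

lemma lc_div {f g : ℂ → ℂ} {α β γ δ : ℂ} {p : ℂ} (hf : HasFDerivAt f (lc α β) p)
    (hg : HasFDerivAt g (lc γ δ) p) (hgp : g p ≠ 0) :
    HasFDerivAt (fun z => f z / g z)
      (lc ((g p * α - f p * γ) / g p ^ 2) ((g p * β - f p * δ) / g p ^ 2)) p := by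
  have h2 := lc_mul hf (lc_inv hg hgp)
  have e1 : (fun z => f z / g z) = fun z => f z * (g z)⁻¹ := by
    funext z; rw [div_eq_mul_inv]
  rw [e1]
  have e : lc (f p * (-γ / g p ^ 2) + (g p)⁻¹ * α) (f p * (-δ / g p ^ 2) + (g p)⁻¹ * β)
      = lc ((g p * α - f p * γ) / g p ^ 2) ((g p * β - f p * δ) / g p ^ 2) := by
    have h3 : (g p)⁻¹ = g p / g p ^ 2 := by field_simp
    rw [h3]; congr 1 <;> field_simp <;> ring
  exact e ▸ h2

lemma lc_congr {g : ℂ → ℂ} {α β α' β' : ℂ} {p : ℂ} (h : HasFDerivAt g (lc α β) p)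
    (hα : α' = α) (hβ : β' = β) : HasFDerivAt g (lc α' β') p := by
  rw [hα, hβ]; exact h

lemma hasDerivAt_matrix {F : ℂ → Matrix (Fin 2) (Fin 2) ℂ} {M : Matrix (Fin 2) (Fin 2) ℂ} {p : ℂ}
    (h : ∀ i j, HasDerivAt (fun z => F z i j) (M i j) p) :
    HasDerivAt F M p := by
  have h1 : HasFDerivAt F (ContinuousLinearMap.smulRight (1 : ℂ →L[ℂ] ℂ) M) p := by
    apply hasFDerivAt_pi''
    intro i
    apply hasFDerivAt_pi''
    intro j
    have e : (ContinuousLinearMap.proj j).comp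
        ((ContinuousLinearMap.proj i).comp (ContinuousLinearMap.smulRight (1 : ℂ →L[ℂ] ℂ) M))
        = ContinuousLinearMap.smulRight (1 : ℂ →L[ℂ] ℂ) (M i j) := by
      ext v; simp; change ((1 : ℂ →L[ℂ] ℂ) 1 • M) i j = M i j; simp
    exact e ▸ (h i j).hasFDerivAt
  have := h1.hasDerivAt
  simpa using this

noncomputable def L3 (T1 T2 T3 : ℂ →L[ℝ] ℝ) : ℂ →L[ℝ] EuclideanSpace ℝ (Fin 3) :=
  (EuclideanSpace.equiv (Fin 3) ℝ).symm.toContinuousLinearMap.comp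
    (ContinuousLinearMap.pi ![T1, T2, T3])

@[simp] lemma L3_apply (T1 T2 T3 : ℂ →L[ℝ] ℝ) (v : ℂ) (i : Fin 3) :
    L3 T1 T2 T3 v i = ![T1 v, T2 v, T3 v] i := by
  fin_cases i <;> simp [L3]

lemma hasFDerivAt_L3 {g1 g2 g3 : ℂ → ℝ} {g : ℂ → EuclideanSpace ℝ (Fin 3)}
    (hg : ∀ z, g z = ![g1 z, g2 z, g3 z])
    {T1 T2 T3 : ℂ →L[ℝ] ℝ} {p : ℂ}
    (h1 : HasFDerivAt g1 T1 p) (h2 : HasFDerivAt g2 T2 p) (h3 : HasFDerivAt g3 T3 p) :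
    HasFDerivAt g (L3 T1 T2 T3) p := by
  have hpi : HasFDerivAt (fun z => (![g1 z, g2 z, g3 z] : Fin 3 → ℝ))
      (ContinuousLinearMap.pi ![T1, T2, T3]) p := by
    apply hasFDerivAt_pi''
    intro i
    fin_cases i
    · simpa using h1
    · simpa using h2
    · simpa using h3
  have hcomp := ((EuclideanSpace.equiv (Fin 3) ℝ).symm.toContinuousLinearMap.hasFDerivAt).comp p hpi
  have hfun : g = (⇑(EuclideanSpace.equiv (Fin 3) ℝ).symm.toContinuousLinearMap
      ∘ fun z => (![g1 z, g2 z, g3 z] : Fin 3 → ℝ)) := by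
    funext z
    apply WithLp.ofLp_injective
    rw [hg z]
    rfl
  rw [hfun]
  exact hcomp

lemma norm3 (x : EuclideanSpace ℝ (Fin 3)) :
    ‖x‖ = Real.sqrt ((x 0) ^ 2 + (x 1) ^ 2 + (x 2) ^ 2) := by
  rw [EuclideanSpace.norm_eq]
  congr 1
  simp [Fin.sum_univ_three, Real.norm_eq_abs, sq_abs]

lemma inner3 (x y : EuclideanSpace ℝ (Fin 3)) :
    ⟪x, y⟫ = x 0 * y 0 + x 1 * y 1 + x 2 * y 2 := by
  simp [PiLp.inner_apply, Fin.sum_univ_three]; ring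

lemma sq3_zero {x y z : ℝ} (h : x ^ 2 + y ^ 2 + z ^ 2 ≤ 0) : x = 0 ∧ y = 0 ∧ z = 0 := by
  have hx := sq_nonneg x
  have hy := sq_nonneg y
  have hz := sq_nonneg z
  refine ⟨?_, ?_, ?_⟩ <;>
    [exact pow_eq_zero_iff two_ne_zero |>.mp (le_antisymm (by linarith) hx);
     exact pow_eq_zero_iff two_ne_zero |>.mp (le_antisymm (by linarith) hy);
     exact pow_eq_zero_iff two_ne_zero |>.mp (le_antisymm (by linarith) hz)]

set_option maxHeartbeats 1000000 in
theorem bryant_representation_conformal_immersion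
    (U : Set ℂ) (hU : IsOpen U)
    (a b c d : ℂ → ℂ)
    (ha : DifferentiableOn ℂ a U) (hb : DifferentiableOn ℂ b U)
    (hc : DifferentiableOn ℂ c U) (hd : DifferentiableOn ℂ d U)
    (F : ℂ → Matrix (Fin 2) (Fin 2) ℂ)
    (hF : ∀ z, F z = !![a z, b z; c z, d z])
    (hSL : ∀ z ∈ U, (F z).det = 1)
    (hnull : ∀ z ∈ U, (deriv F z).det = 0)
    (himm : ∀ z ∈ U, deriv F z ≠ 0)
    (w : ℂ → ℂ)
    (hw : ∀ z, w z = (a z * (starRingEnd ℂ) (c z) + b z * (starRingEnd ℂ) (d z)) /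
      ((‖c z‖ ^ 2 + ‖d z‖ ^ 2 : ℝ) : ℂ))
    (x₃ : ℂ → ℝ)
    (hx₃ : ∀ z, x₃ z = 1 / (‖c z‖ ^ 2 + ‖d z‖ ^ 2))
    (f : ℂ → EuclideanSpace ℝ (Fin 3))
    (hf : ∀ z, f z = ![(w z).re, (w z).im, x₃ z]) :
    ∀ p ∈ U,
      DifferentiableAt ℝ f p ∧
      ‖fderiv ℝ f p 1‖ = ‖fderiv ℝ f p Complex.I‖ ∧
      0 < ‖fderiv ℝ f p 1‖ ∧
      ⟪fderiv ℝ f p 1, fderiv ℝ f p Complex.I⟫ = 0 := by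
  have hFF : F = fun z => !![a z, b z; c z, d z] := funext hF
  subst hFF
  intro p hp
  have hUp : U ∈ nhds p := hU.mem_nhds hp
  have Ha : HasDerivAt a (deriv a p) p := (ha.differentiableAt hUp).hasDerivAt
  have Hb : HasDerivAt b (deriv b p) p := (hb.differentiableAt hUp).hasDerivAt
  have Hc : HasDerivAt c (deriv c p) p := (hc.differentiableAt hUp).hasDerivAt
  have Hd : HasDerivAt d (deriv d p) p := (hd.differentiableAt hUp).hasDerivAt
  set A : ℂ := a p with hA
  set B : ℂ := b p with hB
  set C : ℂ := c p with hC
  set D : ℂ := d p with hD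
  set A' : ℂ := deriv a p with hA'
  set B' : ℂ := deriv b p with hB'
  set C' : ℂ := deriv c p with hC'
  set D' : ℂ := deriv d p with hD'
  -- the derivative of F
  have hM : HasDerivAt (fun z => !![a z, b z; c z, d z]) (!![A', B'; C', D']) p := by
    apply hasDerivAt_matrix
    intro i j
    fin_cases i <;> fin_cases j <;> simp <;> [exact Ha; exact Hb; exact Hc; exact Hd]
  have hMder : deriv (fun z => !![a z, b z; c z, d z]) p = !![A', B'; C', D'] := hM.deriv
  -- the scalar hypotheses
  have hdet1 : A * D - B * C = 1 := by
    have := hSL p hp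
    rw [Matrix.det_fin_two_of] at this
    linear_combination this
  have hnull2 : A' * D' - B' * C' = 0 := by
    have := hnull p hp
    rw [hMder, Matrix.det_fin_two_of] at this
    linear_combination this
  have himm2 : ¬(A' = 0 ∧ B' = 0 ∧ C' = 0 ∧ D' = 0) := by
    rintro ⟨h1, h2, h3, h4⟩
    apply himm p hp
    rw [hMder, h1, h2, h3, h4]
    ext i j
    fin_cases i <;> fin_cases j <;> simp
  have hdet2 : A' * D + A * D' - (B' * C + B * C') = 0 := by
    have hgd : HasDerivAt (fun z => a z * d z - b z * c z)
        (A' * D + A * D' - (B' * C + B * C')) p := by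
      have := ((Ha.mul Hd).sub (Hb.mul Hc))
      exact this
    have hev : (fun z => a z * d z - b z * c z) =ᶠ[nhds p] fun _ => 1 := by
      filter_upwards [hUp] with z hz
      have := hSL z hz
      rw [Matrix.det_fin_two_of] at this
      linear_combination this
    have h0 : HasDerivAt (fun _ : ℂ => (1 : ℂ)) (A' * D + A * D' - (B' * C + B * C')) p :=
      hgd.congr_of_eventuallyEq hev.symm
    have h1 := h0.deriv
    rw [deriv_const] at h1
    linear_combination -h1
  -- basic positivity
  set Cb : ℂ := conj C with hCb
  set Db : ℂ := conj D with hDb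
  set DenC : ℂ := C * Cb + D * Db with hDenC
  have hCD0 : ¬(C = 0 ∧ D = 0) := by
    rintro ⟨h1, h2⟩
    rw [h1, h2] at hdet1
    simp at hdet1
  have hDr : (0:ℝ) < ‖C‖ ^ 2 + ‖D‖ ^ 2 := by
    rcases not_and_or.mp hCD0 with h | h
    · have h1 : 0 < ‖C‖ := norm_pos_iff.mpr h
      nlinarith [sq_nonneg (‖D‖)]
    · have h1 : 0 < ‖D‖ := norm_pos_iff.mpr h
      nlinarith [sq_nonneg (‖C‖)]
  have hDenCr : DenC = ((‖C‖ ^ 2 + ‖D‖ ^ 2 : ℝ) : ℂ) := by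
    rw [hDenC, hCb, hDb, Complex.mul_conj, Complex.mul_conj]
    push_cast [Complex.sq_norm]
    ring
  have hDenC0 : DenC ≠ 0 := by
    rw [hDenCr]
    exact_mod_cast ne_of_gt hDr
  have hDenCconj : conj DenC = DenC := by rw [hDenCr]; exact Complex.conj_ofReal _
  -- rewrite w and x₃ in complex form
  have hden_eq : ∀ z, ((‖c z‖ ^ 2 + ‖d z‖ ^ 2 : ℝ) : ℂ)
      = c z * conj (c z) + d z * conj (d z) := by
    intro z
    rw [Complex.mul_conj, Complex.mul_conj]
    push_cast [Complex.sq_norm]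
    ring
  have hw' : w = fun z => (a z * conj (c z) + b z * conj (d z)) /
      (c z * conj (c z) + d z * conj (d z)) := by
    funext z; rw [hw z, hden_eq z]
  have hx' : x₃ = fun z => ((c z * conj (c z) + d z * conj (d z))⁻¹).re := by
    funext z
    rw [hx₃ z, ← hden_eq z,
      show ((‖c z‖ ^ 2 + ‖d z‖ ^ 2 : ℝ) : ℂ)⁻¹
        = (((‖c z‖ ^ 2 + ‖d z‖ ^ 2 : ℝ)⁻¹ : ℝ) : ℂ) from
        (Complex.ofReal_inv _).symm,
      Complex.ofReal_re, one_div]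
  -- derivative data
  set φ : ℂ := A * Cb + B * Db with hφ
  set φα : ℂ := A' * Cb + B' * Db with hφα
  set φβ : ℂ := A * conj C' + B * conj D' with hφβ
  set ψα : ℂ := C' * Cb + D' * Db with hψα
  set ψβ : ℂ := C * conj C' + D * conj D' with hψβd
  set α1 : ℂ := (DenC * φα - φ * ψα) / DenC ^ 2 with hα1
  set β1 : ℂ := (DenC * φβ - φ * ψβ) / DenC ^ 2 with hβ1
  set rα : ℂ := -ψα / DenC ^ 2 with hrα
  set rβ : ℂ := -ψβ / DenC ^ 2 with hrβ
  have hfa : HasFDerivAt a (lc A' 0) p := lc_of_hasDerivAt Ha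
  have hfb : HasFDerivAt b (lc B' 0) p := lc_of_hasDerivAt Hb
  have hfcj : HasFDerivAt (fun z => conj (c z)) (lc 0 (conj C')) p := by
    simpa using lc_conj (lc_of_hasDerivAt Hc)
  have hfdj : HasFDerivAt (fun z => conj (d z)) (lc 0 (conj D')) p := by
    simpa using lc_conj (lc_of_hasDerivAt Hd)
  have hfc : HasFDerivAt c (lc C' 0) p := lc_of_hasDerivAt Hc
  have hfd : HasFDerivAt d (lc D' 0) p := lc_of_hasDerivAt Hd
  have hnum : HasFDerivAt (fun z => a z * conj (c z) + b z * conj (d z)) (lc φα φβ) p := by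
    apply lc_congr (lc_add (lc_mul hfa hfcj) (lc_mul hfb hfdj)) <;>
      (simp only [hφα, hφβ, hCb, hDb, hA, hB, hC, hD, hA', hB']; ring)
  have hden : HasFDerivAt (fun z => c z * conj (c z) + d z * conj (d z)) (lc ψα ψβ) p := by
    apply lc_congr (lc_add (lc_mul hfc hfcj) (lc_mul hfd hfdj)) <;>
      (simp only [hψα, hψβd, hCb, hDb, hC, hD, hC', hD']; ring)
  have hDenC0' : c p * conj (c p) + d p * conj (d p) ≠ 0 := hDenC0
  have hww : HasFDerivAt w (lc α1 β1) p := by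
    rw [hw']
    apply lc_congr (lc_div hnum hden hDenC0') <;>
      (simp only [hα1, hβ1, hDenC, hφα, hφβ, hφ, hψα, hψβd, hCb, hDb, hA, hB, hC, hD,
        hA', hB', hC', hD']; try ring)
  have hx3d : HasFDerivAt x₃ (Complex.reCLM.comp (lc rα rβ)) p := by
    rw [hx']
    have e1 : rα = -ψα / (c p * conj (c p) + d p * conj (d p)) ^ 2 := by
      rw [hrα, hDenC, hCb, hDb, hC, hD]
    have e2 : rβ = -ψβ / (c p * conj (c p) + d p * conj (d p)) ^ 2 := by
      rw [hrβ, hDenC, hCb, hDb, hC, hD]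
    rw [e1, e2]
    exact (Complex.reCLM.hasFDerivAt).comp p (lc_inv hden hDenC0')
  have h1c : HasFDerivAt (fun z => (w z).re) (Complex.reCLM.comp (lc α1 β1)) p :=
    (Complex.reCLM.hasFDerivAt).comp p hww
  have h2c : HasFDerivAt (fun z => (w z).im) (Complex.imCLM.comp (lc α1 β1)) p :=
    (Complex.imCLM.hasFDerivAt).comp p hww
  have Hf : HasFDerivAt f (L3 (Complex.reCLM.comp (lc α1 β1)) (Complex.imCLM.comp (lc α1 β1))
      (Complex.reCLM.comp (lc rα rβ))) p := hasFDerivAt_L3 hf h1c h2c hx3d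
  have hfder := Hf.fderiv
  -- conjugation relations
  have hrβc : rβ = conj rα := by
    rw [hrβ, hrα, map_div₀, map_neg, map_pow, hDenCconj, hψβd, hψα]
    simp only [map_add, _root_.map_mul, hCb, hDb, Complex.conj_conj]
    ring
  have hnumβ : DenC * φβ - φ * ψβ = Db * conj C' - Cb * conj D' := by
    rw [hDenC, hφβ, hφ, hψβd]
    linear_combination ((Db : ℂ) * conj C' - Cb * conj D') * hdet1
  have hβ1c : conj β1 = (D * C' - C * D') / DenC ^ 2 := by
    rw [hβ1, map_div₀, hnumβ, map_pow, hDenCconj]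
    simp only [map_sub, _root_.map_mul, hCb, hDb, Complex.conj_conj]
  -- the master conformality identity
  have hQkey : (DenC * φα - φ * ψα) * (D * C' - C * D') + ψα ^ 2 = 0 := by
    rw [hDenC, hφα, hφ, hψα]
    linear_combination (-((C' * Cb + D' * Db) ^ 2)) * hdet1 +
      ((C * Cb + D * Db) * (C' * Cb + D' * Db)) * hdet2 - ((C * Cb + D * Db) ^ 2) * hnull2
  have hQ : α1 * conj β1 + rα ^ 2 = 0 := by
    have e : α1 * conj β1 + rα ^ 2
        = ((DenC * φα - φ * ψα) * (D * C' - C * D') + ψα ^ 2) / DenC ^ 4 := by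
      rw [hβ1c, hα1, hrα]
      field_simp
    rw [e, hQkey, zero_div]
  have hre : α1.re * β1.re + α1.im * β1.im + (rα.re * rα.re - rα.im * rα.im) = 0 := by
    have h := congrArg Complex.re hQ
    simp only [Complex.add_re, Complex.mul_re, Complex.conj_re, Complex.conj_im,
      Complex.zero_re, pow_two] at h
    linear_combination h
  have him : -(α1.re * β1.im) + α1.im * β1.re + (rα.re * rα.im + rα.im * rα.re) = 0 := by
    have h := congrArg Complex.im hQ
    simp only [Complex.add_im, Complex.mul_im, Complex.conj_re, Complex.conj_im,
      Complex.zero_im, pow_two] at h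
    linear_combination h
  -- component values
  have e10 : fderiv ℝ f p 1 0 = α1.re + β1.re := by rw [hfder]; simp
  have e11 : fderiv ℝ f p 1 1 = α1.im + β1.im := by rw [hfder]; simp
  have e12 : fderiv ℝ f p 1 2 = rα.re + rα.re := by rw [hfder]; simp [hrβc]
  have eI0 : fderiv ℝ f p Complex.I 0 = β1.im - α1.im := by
    rw [hfder]; simp [Complex.conj_I]; ring
  have eI1 : fderiv ℝ f p Complex.I 1 = α1.re - β1.re := by
    rw [hfder]; simp [Complex.conj_I]; ring
  have eI2 : fderiv ℝ f p Complex.I 2 = -rα.im - rα.im := by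
    rw [hfder]; simp [hrβc, Complex.conj_I]; ring
  have hSS : (α1.re + β1.re) ^ 2 + (α1.im + β1.im) ^ 2 + (rα.re + rα.re) ^ 2
      = (β1.im - α1.im) ^ 2 + (α1.re - β1.re) ^ 2 + (-rα.im - rα.im) ^ 2 := by
    linear_combination 4 * hre
  clear_value A B C D A' B' C' D' Cb Db DenC φ φα φβ ψα ψβ α1 β1 rα rβ
  refine ⟨Hf.differentiableAt, ?_, ?_, ?_⟩
  · rw [norm3, norm3, e10, e11, e12, eI0, eI1, eI2]
    rw [hSS]
  · rw [norm3, e10, e11, e12]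
    apply Real.sqrt_pos.mpr
    by_contra hcon
    push_neg at hcon
    clear * - hcon hSS hrα hα1 hβ1c hψα hφα hDenC hDenC0 hdet2 himm2
    obtain ⟨h00, h01, h02⟩ := sq3_zero hcon
    have hS2 : (β1.im - α1.im) ^ 2 + (α1.re - β1.re) ^ 2 + (-rα.im - rα.im) ^ 2 ≤ 0 := by
      rw [← hSS, h00, h01, h02]; norm_num
    obtain ⟨h10, h11, h12⟩ := sq3_zero hS2
    have hα0 : α1 = 0 := Complex.ext (by simp; linarith) (by simp; linarith)
    have hβ0 : β1 = 0 := Complex.ext (by simp; linarith) (by simp; linarith)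
    have hr0 : rα = 0 := Complex.ext (by simp; linarith) (by simp; linarith)
    -- extract vanishing of the numerators
    have hψα0 : ψα = 0 := by
      have h2 : -ψα / DenC ^ 2 = 0 := by rw [← hrα, hr0]
      field_simp at h2
      simpa using h2
    have hh0 : D * C' - C * D' = 0 := by
      have h2 := hβ1c
      rw [hβ0, map_zero] at h2
      field_simp at h2
      linear_combination -h2
    have hφα0 : φα = 0 := by
      have h2 : (DenC * φα - φ * ψα) / DenC ^ 2 = 0 := by rw [← hα1, hα0]
      field_simp at h2
      have h3 : DenC * φα = 0 := by linear_combination h2 + φ * hψα0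
      rcases mul_eq_zero.mp h3 with h | h
      · exact absurd h hDenC0
      · exact h
    have hψα0' : C' * Cb + D' * Db = 0 := by rw [← hψα]; exact hψα0
    have hφα0' : A' * Cb + B' * Db = 0 := by rw [← hφα]; exact hφα0
    have hC'0 : C' = 0 := by
      have h2 : C' * DenC = 0 := by
        rw [hDenC]
        linear_combination C * hψα0' + Db * hh0
      exact (mul_eq_zero.mp h2).resolve_right hDenC0
    have hD'0 : D' = 0 := by
      have h2 : D' * DenC = 0 := by
        rw [hDenC]
        linear_combination D * hψα0' - Cb * hh0
      exact (mul_eq_zero.mp h2).resolve_right hDenC0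
    have hAD : A' * D - B' * C = 0 := by
      rw [hC'0, hD'0] at hdet2
      linear_combination hdet2
    have hA'0 : A' = 0 := by
      have h2 : A' * DenC = 0 := by
        rw [hDenC]
        linear_combination C * hφα0' + Db * hAD
      exact (mul_eq_zero.mp h2).resolve_right hDenC0
    have hB'0 : B' = 0 := by
      have h2 : B' * DenC = 0 := by
        rw [hDenC]
        linear_combination D * hφα0' - Cb * hAD
      exact (mul_eq_zero.mp h2).resolve_right hDenC0
    exact himm2 ⟨hA'0, hB'0, hC'0, hD'0⟩
  · rw [inner3, e10, e11, e12, eI0, eI1, eI2]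
    linear_combination (-2 : ℝ) * him
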